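/- arXiv:0802.2866 — 4 statements merged into one kernel-verified Lean document; each statement's English description precedes it below -/
import Mathlib

section
/- Let S be a finite nonempty semigroup and let c be a map assigning to each pair (m,n) of natural numbers with m < n an element c(m,n) ∈ S, such that c is additive: c(m,p) = c(m,n)·c(n,p) whenever m < n < p. Then there exist an infinite set H ⊆ ℕ and an idempotent e ∈ S (e·e = e) such that c(m,n) = e for all m < n with m, n ∈ H. -/
open Filter

private lemma ultra_const {S : Type*} [Finite S] (U : Ultrafilter ℕ) (g : ℕ → S) :
    ∃ e : S, {m | g m = e} ∈ U := by
  by_contra h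
  push_neg at h
  have h2 : ∀ e : S, {m | g m = e}ᶜ ∈ U :=
    fun e => Ultrafilter.compl_mem_iff_notMem.mpr (h e)
  have hint : (⋂ e : S, {m | g m = e}ᶜ) ∈ U := Filter.iInter_mem.mpr h2
  have hempty : (⋂ e : S, {m | g m = e}ᶜ) = (∅ : Set ℕ) := by
    ext m; simp
  rw [hempty] at hint
  exact (Ultrafilter.nonempty_of_mem hint).ne_empty rfl

/-- additive Ramsey for finite semigroups: if `c` assigns to each pair
`m < n` an element of a finite nonempty semigroup `S` additively, i.e.
`c m p = c m n * c n p` for `m < n < p`, then there is an infinite set `H ⊆ ℕ` and an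
idempotent `e ∈ S` with `c m n = e` for all `m, n ∈ H` with `m < n`. -/
theorem stmt4 {S : Type*} [Semigroup S] [Finite S] [Nonempty S]
    (c : ℕ → ℕ → S) (hadd : ∀ m n p : ℕ, m < n → n < p → c m p = c m n * c n p) :
    ∃ H : Set ℕ, H.Infinite ∧ ∃ e : S, e * e = e ∧
      ∀ m ∈ H, ∀ n ∈ H, m < n → c m n = e := by
  classical
  set U : Ultrafilter ℕ := Filter.hyperfilter ℕ with hUdef
  choose f hf using fun m => ultra_const U (c m)
  obtain ⟨e, he⟩ := ultra_const U f
  set B : Set ℕ := {m | f m = e} with hB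
  -- a choice function picking an element of a nonempty set
  let pick : Set ℕ → ℕ := fun A => if h : A.Nonempty then h.choose else 0
  have hpick : ∀ {A : Set ℕ}, A ∈ U → pick A ∈ A := by
    intro A hA
    have hne : A.Nonempty := Ultrafilter.nonempty_of_mem hA
    simp only [pick, dif_pos hne]
    exact hne.choose_spec
  -- the decreasing sequence of large sets
  let A : ℕ → Set ℕ := fun k =>
    Nat.rec B (fun _ Ak => Ak ∩ {n | pick Ak < n ∧ c (pick Ak) n = e}) k
  have hA0 : A 0 = B := rfl
  have hAsucc : ∀ k, A (k + 1) = A k ∩ {n | pick (A k) < n ∧ c (pick (A k)) n = e} :=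
    fun k => rfl
  -- each A k is large and contained in B
  have key : ∀ k, A k ∈ U ∧ A k ⊆ B := by
    intro k
    induction k with
    | zero => exact ⟨he, fun x hx => hx⟩
    | succ k ih =>
      obtain ⟨hAk, hAkB⟩ := ih
      have hxB : pick (A k) ∈ B := hAkB (hpick hAk)
      have hfx : f (pick (A k)) = e := hxB
      have h1 : {n | c (pick (A k)) n = e} ∈ U := by
        have := hf (pick (A k)); rwa [hfx] at this
      have h2 : {n | pick (A k) < n} ∈ U := by
        apply Filter.mem_hyperfilter_of_finite_compl
        have : {n | pick (A k) < n}ᶜ ⊆ Set.Iic (pick (A k)) := by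
          intro n hn
          simp only [Set.mem_compl_iff, Set.mem_setOf_eq, not_lt] at hn
          exact hn
        exact (Set.finite_Iic _).subset this
      refine ⟨?_, fun x hx => hAkB (by rw [hAsucc k] at hx; exact hx.1)⟩
      rw [hAsucc k]
      have : {n | pick (A k) < n} ∩ {n | c (pick (A k)) n = e} ∈ U :=
        Filter.inter_mem h2 h1
      refine Filter.inter_mem hAk (Filter.mem_of_superset this ?_)
      intro n hn
      exact ⟨hn.1, hn.2⟩
  -- the sequence of chosen points
  set x : ℕ → ℕ := fun k => pick (A k) with hx
  have hmem : ∀ k, x k ∈ A k := fun k => hpick (key k).1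
  have hstep : ∀ k, x k < x (k + 1) ∧ c (x k) (x (k + 1)) = e := by
    intro k
    have := hmem (k + 1)
    rw [hAsucc k] at this
    exact ⟨this.2.1, this.2.2⟩
  have hmono : StrictMono x := strictMono_nat_of_lt_succ fun k => (hstep k).1
  have hanti : ∀ i j, i ≤ j → A j ⊆ A i := by
    intro i j hij
    induction j with
    | zero => simp_all
    | succ j ih =>
      rcases Nat.lt_or_ge i (j + 1) with h | h
      · intro n hn
        rw [hAsucc j] at hn
        exact ih (Nat.lt_succ_iff.mp h) hn.1
      · have : i = j + 1 := le_antisymm hij h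
        subst this; exact fun n hn => hn
  have hpair : ∀ i j, i < j → c (x i) (x j) = e := by
    intro i j hij
    have : x j ∈ A (i + 1) := hanti (i + 1) j hij (hmem j)
    rw [hAsucc i] at this
    exact this.2.2
  refine ⟨Set.range x, Set.infinite_range_of_injective hmono.injective, e, ?_, ?_⟩
  · have h02 : c (x 0) (x 2) = e := hpair 0 2 (by norm_num)
    have h01 : c (x 0) (x 1) = e := hpair 0 1 (by norm_num)
    have h12 : c (x 1) (x 2) = e := hpair 1 2 (by norm_num)
    have := hadd (x 0) (x 1) (x 2) (hmono (show (0:ℕ)<1 by norm_num)) (hmono (show (1:ℕ)<2 by norm_num))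
    rw [h02, h01, h12] at this
    exact this.symm
  · rintro m ⟨i, rfl⟩ n ⟨j, rfl⟩ hmn
    exact hpair i j (hmono.lt_iff_lt.mp hmn)
end

section
/- Let I be a finite index set and, for each i ∈ I, let Σ_i be an alphabet, α_i : ℕ → Σ_i an ω-word, M_i a finite monoid, and h_i : Σ_i → M_i a map. Then there exist a single strictly increasing sequence a : ℕ → ℕ and idempotent elements e_i ∈ M_i (e_i·e_i = e_i) such that for every i ∈ I, the sequence a is an (h_i, e_i)-homogeneous factorisation of α_i. -/
/-- The product `h(α[m,n)) = h (α m) * h (α (m+1)) * ⋯ * h (α (n-1))` in a monoid. -/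
def blockProd {A M : Type*} [Monoid M] (h : A → M) (α : ℕ → A) (m n : ℕ) : M :=
  ((List.range' m (n - m)).map fun i => h (α i)).prod

/-- A strictly increasing sequence `a` is an `(h,e)`-homogeneous factorisation of `α`
if `h(α[a n, a (n+1))) = e` for all `n`. -/
def Homog {A M : Type*} [Monoid M] (h : A → M) (e : M) (a : ℕ → ℕ) (α : ℕ → A) : Prop :=
  ∀ n : ℕ, blockProd h α (a n) (a (n + 1)) = e

lemma blockProd_mul {A M : Type*} [Monoid M] (h : A → M) (α : ℕ → A) {m n k : ℕ}
    (h1 : m ≤ n) (h2 : n ≤ k) :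
    blockProd h α m n * blockProd h α n k = blockProd h α m k := by
  unfold blockProd
  rw [← List.prod_append, ← List.map_append]
  show ((List.Ico m n ++ List.Ico n k).map _).prod = _
  rw [List.Ico.append_consecutive h1 h2]
  rfl

/-- The one-step lemma for the infinite Ramsey argument. -/
lemma ramsey_step {C : Type*} [Finite C] (c : ℕ → ℕ → C) (S : Set ℕ) (hS : S.Infinite) :
    ∃ x ∈ S, ∃ e : C, ∃ T : Set ℕ, T.Infinite ∧ T ⊆ S ∧
      ∀ n ∈ T, x < n ∧ c x n = e := by
  obtain ⟨x, hx⟩ := hS.nonempty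
  have hS' : {n ∈ S | x < n}.Infinite := by
    have : {n ∈ S | x < n} = S \ Set.Iic x := by
      ext n; simp [Set.mem_diff, not_le, and_comm]
    rw [this]
    exact hS.diff (Set.finite_Iic x)
  haveI : Infinite {n ∈ S | x < n} := hS'.to_subtype
  obtain ⟨e, he⟩ := Finite.exists_infinite_fiber (fun n : {n ∈ S | x < n} => c x n)
  refine ⟨x, hx, e, Subtype.val '' ((fun n : {n ∈ S | x < n} => c x n) ⁻¹' {e}), ?_, ?_, ?_⟩
  · rw [Set.infinite_coe_iff] at he
    exact he.image Subtype.val_injective.injOn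
  · rintro n ⟨⟨m, hm⟩, _, rfl⟩; exact hm.1
  · rintro n ⟨⟨m, hm⟩, hmem, rfl⟩
    exact ⟨hm.2, hmem⟩

/-- Infinite Ramsey theorem for pairs, in the form needed here. -/
lemma ramsey_pairs {C : Type*} [Finite C] (c : ℕ → ℕ → C) :
    ∃ a : ℕ → ℕ, StrictMono a ∧ ∃ e : C, ∀ m n, m < n → c (a m) (a n) = e := by
  haveI : Nonempty C := ⟨(c 0 0)⟩
  -- choice function
  have step : ∀ S : {S : Set ℕ // S.Infinite}, ∃ p : ℕ × C × {S : Set ℕ // S.Infinite},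
      p.1 ∈ S.1 ∧ p.2.2.1 ⊆ S.1 ∧ ∀ n ∈ p.2.2.1, p.1 < n ∧ c p.1 n = p.2.1 := by
    rintro ⟨S, hS⟩
    obtain ⟨x, hx, e, T, hTinf, hTS, hT⟩ := ramsey_step c S hS
    exact ⟨(x, e, ⟨T, hTinf⟩), hx, hTS, hT⟩
  choose F hF1 hF2 hF3 using step
  -- iterate
  let chain : ℕ → {S : Set ℕ // S.Infinite} := fun n =>
    Nat.rec ⟨Set.univ, Set.infinite_univ⟩ (fun _ S => (F S).2.2) n
  let x : ℕ → ℕ := fun n => (F (chain n)).1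
  let f : ℕ → C := fun n => (F (chain n)).2.1
  have hchain : ∀ n, (chain (n + 1)).1 ⊆ (chain n).1 := fun n => hF2 (chain n)
  have hxmem : ∀ n, x n ∈ (chain n).1 := fun n => hF1 (chain n)
  have hsub : ∀ m n, m ≤ n → (chain n).1 ⊆ (chain m).1 := by
    intro m n hmn
    induction n with
    | zero => cases Nat.le_zero.mp hmn; exact fun _ h => h
    | succ k ih =>
      rcases Nat.lt_or_ge m (k + 1) with hlt | hge
      · exact fun y hy => ih (Nat.lt_succ_iff.mp hlt) (hchain k hy)
      · cases Nat.le_antisymm hmn hge; exact fun _ h => h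
  have key : ∀ m n, m < n → x m < x n ∧ c (x m) (x n) = f m := by
    intro m n hmn
    have : x n ∈ (chain (m + 1)).1 := hsub (m + 1) n hmn (hxmem n)
    exact hF3 (chain m) _ this
  have hxmono : StrictMono x := fun m n hmn => (key m n hmn).1
  -- pigeonhole on f
  obtain ⟨e, he⟩ := Finite.exists_infinite_fiber f
  have hinf : (setOf fun k => f k = e).Infinite := by
    rw [Set.infinite_coe_iff] at he; exact he
  refine ⟨fun j => x (Nat.nth (fun k => f k = e) j),
    fun a b hab => hxmono (Nat.nth_strictMono hinf hab), e, ?_⟩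
  intro m n hmn
  have h1 := key _ _ (Nat.nth_strictMono hinf hmn)
  rw [h1.2]
  exact Nat.nth_mem_of_infinite hinf m

/-- for a finite family of ω-words `α i` and maps `h i` into finite
monoids `M i`, there is a single strictly increasing sequence `a` and idempotents
`e i` such that `a` is an `(h i, e i)`-homogeneous factorisation of `α i` for each `i`. -/
theorem stmt5 {I : Type*} [Finite I] (A : I → Type*) (M : I → Type*)
    [∀ i, Monoid (M i)] [∀ i, Finite (M i)]
    (α : ∀ i, ℕ → A i) (h : ∀ i, A i → M i) :
    ∃ a : ℕ → ℕ, StrictMono a ∧ ∃ e : ∀ i, M i,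
      ∀ i, (e i * e i = e i) ∧ Homog (h i) (e i) a (α i) := by
  obtain ⟨a, ha, e, he⟩ :=
    ramsey_pairs (C := ∀ i, M i) (fun m n => fun i => blockProd (h i) (α i) m n)
  refine ⟨a, ha, e, fun i => ?_⟩
  have hblock : ∀ m n, m < n → blockProd (h i) (α i) (a m) (a n) = e i :=
    fun m n hmn => congrFun (he m n hmn) i
  constructor
  · have h01 := hblock 0 1 Nat.one_pos
    have h12 := hblock 1 2 Nat.one_lt_two
    have h02 := hblock 0 2 Nat.zero_lt_two
    calc e i * e i = blockProd (h i) (α i) (a 0) (a 1) * blockProd (h i) (α i) (a 1) (a 2) := by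
          rw [h01, h12]
      _ = blockProd (h i) (α i) (a 0) (a 2) :=
          blockProd_mul _ _ (le_of_lt (ha Nat.one_pos)) (le_of_lt (ha Nat.one_lt_two))
      _ = e i := h02
  · exact fun n => hblock n (n + 1) (Nat.lt_succ_self n)
end

section
/- (Coarsening step.) Let Σ and Δ be alphabets, z : ℕ → Δ, and x₁, x₂ : ℕ → Σ ω-words. Let M and N be finite monoids with maps f : Σ × Δ → M and when convenient g : Σ × Σ → N, both extended multiplicatively to finite words. Let h : ℕ → ℕ be strictly increasing and suppose: (a) for every n there is a position m with h(n) ≤ m < h(n+1) and x₁ m ≠ x₂ m; (b) there is an idempotent q ∈ M such that h is an (f,q)-homogeneous factorisation of both of the convolutions zip(x₁,z) and zip(x₂,z); (c) there are idempotents t₁₁, t₁₂, t₂₁, t₂₂ ∈ N with t₁₁ = t₂₂ such that for all i,j ∈ {1,2}, h is a (g, t_{ij})-homogeneous factorisation of zip(x_i, x_j). Then there exist a strictly increasing sequence G : ℕ → ℕ whose range is contained in the range of h, ω-words y₁, y₂ : ℕ → Σ, an idempotent s ∈ M, and idempotents t, t↑, t↓ ∈ N such that: (1) y₁ agrees with x₂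 on all positions below h(2) and agrees with x₁ on all positions at or above h(2) (in particular y₁ =_e x₁), and y₂ agrees with x₂ on all positions below h(2); (2) for every n there is a position m with G(n) ≤ m < G(n+1) and y₁ m ≠ y₂ m (so y₁ ≠_e y₂); (3) G is an (f,s)-homogeneous factorisation of both zip(y₁,z) and zip(y₂,z); (4) t↑·t = t↑ and t↓·t = t↓; for j = 1,2 the element g(zip(y_j,y_j)[0, G 0)) absorbs t on the right, i.e. g(zip(y_j,y_j)[0, G 0))·t = g(zip(y_j,y_j)[0, G 0)); (5) for j = 1,2, G is a (g,t)-homogeneous factorisation of zip(y_j,y_j), G is a (g,t↑)-homogeneous factorisation of zip(y₁,y₂), and G is a (g,t↓)-homogeneous factorisation of zip(y₂,y₁). -/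
/-- The convolution of two ω-words. -/
def zipWord {A B : Type*} (x : ℕ → A) (y : ℕ → B) : ℕ → A × B := fun n => (x n, y n)

lemma exists_idem_pow {M : Type*} [Monoid M] [Finite M] (a : M) :
    ∃ k, 0 < k ∧ a ^ k * a ^ k = a ^ k := by
  obtain ⟨m, n, hmn, hE⟩ := Finite.exists_ne_map_eq_of_infinite (fun n : ℕ => a ^ n)
  wlog hlt : m < n generalizing m n
  · exact this n m hmn.symm hE.symm (by omega)
  set p := n - m with hp
  have hp1 : 1 ≤ p := by omega
  have key : ∀ c, a ^ (m + c * p) = a ^ m := by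
    intro c
    induction c with
    | zero => simp
    | succ c ih =>
      have h1 : m + (c+1) * p = (m + c * p) + p := by ring
      have h2 : m + p = n := by omega
      rw [h1, pow_add, ih, ← pow_add, h2, ← hE]
  refine ⟨(m + 1) * p, by positivity, ?_⟩
  rw [← pow_add]
  have h3 : (m+1)*p + (m+1)*p = (m + (m+1) * p) + ((m+1)*p - m) := by
    have : m ≤ (m+1) * p := by nlinarith
    omega
  have h4 : (m+1)*p = m + ((m+1)*p - m) := by
    have : m ≤ (m+1) * p := by nlinarith
    omega
  rw [h3, pow_add, key, ← pow_add, ← h4]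

lemma blockProd_split {A M : Type*} [Monoid M] (f : A → M) (α : ℕ → A) {m n p : ℕ}
    (h1 : m ≤ n) (h2 : n ≤ p) :
    blockProd f α m p = blockProd f α m n * blockProd f α n p := by
  unfold blockProd
  rw [← List.prod_append, ← List.map_append]
  congr 2
  have h3 : p - m = (n - m) + (p - n) := by omega
  have h4 : n = m + (n - m) := by omega
  rw [h3, ← List.range'_append (s := m) (m := n-m) (n := p-n) (step := 1)]
  congr 2
  omega

lemma blockProd_congr {A M : Type*} [Monoid M] (f : A → M) {α β : ℕ → A} {m n : ℕ}
    (hab : ∀ i, m ≤ i → i < n → α i = β i) :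
    blockProd f α m n = blockProd f β m n := by
  unfold blockProd
  congr 1
  apply List.map_congr_left
  intro i hi
  rw [List.mem_range'_1] at hi
  rw [hab i hi.1 (by omega)]

/-- Alternating-pair product lemma. -/
lemma pairProd {A M : Type*} [Monoid M] (f : A → M) (α : ℕ → A) {h : ℕ → ℕ}
    (hmono : StrictMono h) (a : ℕ) (u v : M) :
    ∀ k : ℕ,
    (∀ i, i < k → blockProd f α (h (a + 2*i)) (h (a + 2*i + 1)) = u) →
    (∀ i, i < k → blockProd f α (h (a + 2*i + 1)) (h (a + 2*i + 2)) = v) →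
    blockProd f α (h a) (h (a + 2*k)) = (u * v) ^ k := by
  intro k
  induction k with
  | zero => intro _ _; simp [blockProd]
  | succ k ih =>
    intro hu hv
    have e1 : h a ≤ h (a + 2*k) := hmono.le_iff_le.2 (by omega)
    have e2 : h (a + 2*k) ≤ h (a + 2*k + 1) := le_of_lt (hmono (by omega))
    have e3 : h (a + 2*k + 1) ≤ h (a + 2*(k+1)) := by
      apply hmono.le_iff_le.2; omega
    rw [show a + 2*(k+1) = (a + 2*k + 1) + 1 by ring] at e3 ⊢
    rw [blockProd_split f α e1 (le_trans e2 e3),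
        blockProd_split f α e2 e3,
        ih (fun i hi => hu i (by omega)) (fun i hi => hv i (by omega)),
        hu k (by omega)]
    have := hv k (by omega)
    rw [show a + 2*k + 2 = a + 2*k + 1 + 1 by ring] at this
    rw [this, pow_succ]

lemma idem_pow {M : Type*} [Monoid M] {e : M} (he : e * e = e) :
    ∀ k, 0 < k → e ^ k = e := by
  intro k hk
  induction k with
  | zero => omega
  | succ k ih =>
    rcases Nat.eq_zero_or_pos k with h | h
    · simp [h]
    · rw [pow_succ, ih h, he]

lemma findGreatest_block {h : ℕ → ℕ} (hmono : StrictMono h) (j m : ℕ)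
    (h1 : h j ≤ m) (h2 : m < h (j + 1)) :
    Nat.findGreatest (fun i => h i ≤ m) m = j := by
  have hjm : j ≤ m := le_trans hmono.le_apply h1
  have hge : j ≤ Nat.findGreatest (fun i => h i ≤ m) m := Nat.le_findGreatest hjm h1
  have hspec : h (Nat.findGreatest (fun i => h i ≤ m) m) ≤ m :=
    Nat.findGreatest_spec (P := fun i => h i ≤ m) hjm h1
  by_contra hne
  have hlt : j + 1 ≤ Nat.findGreatest (fun i => h i ≤ m) m := by omega
  have : h (j+1) ≤ h (Nat.findGreatest (fun i => h i ≤ m) m) := hmono.le_iff_le.2 hlt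
  omega

lemma pow_mul_idem {M : Type*} [Monoid M] {a b : M} (hb : b * b = b) {k : ℕ} (hk : 0 < k) :
    (a * b) ^ k * b = (a * b) ^ k := by
  rw [show k = (k-1)+1 by omega, pow_succ, mul_assoc, mul_assoc, hb]

lemma Gblock {C M' : Type*} [Monoid M'] (f : C → M') (α βe βo : ℕ → C) {h : ℕ → ℕ}
    (hmono : StrictMono h) (u v : M')
    (hβe : ∀ j, 2 ≤ j → j % 2 = 0 → ∀ m, h j ≤ m → m < h (j+1) → α m = βe m)
    (hβo : ∀ j, 2 ≤ j → j % 2 = 1 → ∀ m, h j ≤ m → m < h (j+1) → α m = βo m)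
    (hu : ∀ j, blockProd f βe (h j) (h (j+1)) = u)
    (hv : ∀ j, blockProd f βo (h j) (h (j+1)) = v)
    (k c : ℕ) :
    blockProd f α (h (2*c+2)) (h (2*c+2 + 2*k)) = (u*v)^k := by
  apply pairProd f α hmono (2*c+2) u v k
  · intro i _
    rw [blockProd_congr f (fun m hm1 hm2 => hβe (2*c+2+2*i) (by omega) (by omega) m hm1 hm2)]
    exact hu _
  · intro i _
    rw [blockProd_congr f (fun m hm1 hm2 => hβo (2*c+2+2*i+1) (by omega) (by omega) m hm1 hm2)]
    exact hv _

/-- Coarsening step. -/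
theorem stmt8 {A Δ M N : Type*} [Monoid M] [Finite M] [Monoid N] [Finite N]
    (z : ℕ → Δ) (x₁ x₂ : ℕ → A) (f : A × Δ → M) (g : A × A → N)
    (h : ℕ → ℕ) (hmono : StrictMono h)
    -- (a): every h-block contains a position where x₁ and x₂ differ
    (ha : ∀ n : ℕ, ∃ m : ℕ, h n ≤ m ∧ m < h (n + 1) ∧ x₁ m ≠ x₂ m)
    -- (b): a common idempotent q for both convolutions with the parameters z
    (q : M) (hq : q * q = q)
    (hb₁ : Homog f q h (zipWord x₁ z)) (hb₂ : Homog f q h (zipWord x₂ z))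
    -- (c): idempotents t_{ij} with t₁₁ = t₂₂
    (t₁₁ t₁₂ t₂₁ t₂₂ : N)
    (ht₁₁ : t₁₁ * t₁₁ = t₁₁) (ht₁₂ : t₁₂ * t₁₂ = t₁₂)
    (ht₂₁ : t₂₁ * t₂₁ = t₂₁) (ht₂₂ : t₂₂ * t₂₂ = t₂₂)
    (hteq : t₁₁ = t₂₂)
    (hc₁₁ : Homog g t₁₁ h (zipWord x₁ x₁)) (hc₁₂ : Homog g t₁₂ h (zipWord x₁ x₂))
    (hc₂₁ : Homog g t₂₁ h (zipWord x₂ x₁)) (hc₂₂ : Homog g t₂₂ h (zipWord x₂ x₂)) :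
    ∃ (G : ℕ → ℕ) (y₁ y₂ : ℕ → A) (s : M) (t tu td : N),
      StrictMono G ∧ (∀ n : ℕ, ∃ m : ℕ, G n = h m) ∧
      s * s = s ∧ t * t = t ∧ tu * tu = tu ∧ td * td = td ∧
      -- (1)
      (∀ m : ℕ, m < h 2 → y₁ m = x₂ m) ∧ (∀ m : ℕ, h 2 ≤ m → y₁ m = x₁ m) ∧
      (∀ m : ℕ, m < h 2 → y₂ m = x₂ m) ∧
      -- (2)
      (∀ n : ℕ, ∃ m : ℕ, G n ≤ m ∧ m < G (n + 1) ∧ y₁ m ≠ y₂ m) ∧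
      -- (3)
      Homog f s G (zipWord y₁ z) ∧ Homog f s G (zipWord y₂ z) ∧
      -- (4)
      tu * t = tu ∧ td * t = td ∧
      blockProd g (zipWord y₁ y₁) 0 (G 0) * t = blockProd g (zipWord y₁ y₁) 0 (G 0) ∧
      blockProd g (zipWord y₂ y₂) 0 (G 0) * t = blockProd g (zipWord y₂ y₂) 0 (G 0) ∧
      -- (5)
      Homog g t G (zipWord y₁ y₁) ∧ Homog g t G (zipWord y₂ y₂) ∧
      Homog g tu G (zipWord y₁ y₂) ∧ Homog g td G (zipWord y₂ y₁) := by
  classical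
  obtain ⟨k₁, hk₁pos, hk₁⟩ := exists_idem_pow (t₁₂ * t₁₁)
  obtain ⟨k₂, hk₂pos, hk₂⟩ := exists_idem_pow (t₂₁ * t₁₁)
  set k := k₁ * k₂ with hk_def
  have hkpos : 0 < k := Nat.mul_pos hk₁pos hk₂pos
  set G : ℕ → ℕ := fun n => h (2 * k * n + 2) with hG_def
  set y₁ : ℕ → A := fun m => if m < h 2 then x₂ m else x₁ m with hy₁_def
  set y₂ : ℕ → A := fun m =>
    if m < h 2 then x₂ m
    else if (Nat.findGreatest (fun i => h i ≤ m) m) % 2 = 0 then x₂ m else x₁ m with hy₂_def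
  set tu : N := (t₁₂ * t₁₁) ^ k with htu_def
  set td : N := (t₂₁ * t₁₁) ^ k with htd_def
  -- pointwise descriptions
  have hy1lt : ∀ m, m < h 2 → y₁ m = x₂ m := fun m hm => if_pos hm
  have hy1ge : ∀ m, h 2 ≤ m → y₁ m = x₁ m := fun m hm => if_neg (by omega)
  have hy2lt : ∀ m, m < h 2 → y₂ m = x₂ m := fun m hm => if_pos hm
  have hy2e : ∀ j, 2 ≤ j → j % 2 = 0 → ∀ m, h j ≤ m → m < h (j+1) → y₂ m = x₂ m := by
    intro j hj hpar m hm1 hm2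
    have hge : h 2 ≤ m := le_trans (hmono.le_iff_le.2 hj) hm1
    have hJ := findGreatest_block hmono j m hm1 hm2
    simp only [hy₂_def]
    rw [if_neg (by omega), hJ, if_pos hpar]
  have hy2o : ∀ j, 2 ≤ j → j % 2 = 1 → ∀ m, h j ≤ m → m < h (j+1) → y₂ m = x₁ m := by
    intro j hj hpar m hm1 hm2
    have hge : h 2 ≤ m := le_trans (hmono.le_iff_le.2 hj) hm1
    have hJ := findGreatest_block hmono j m hm1 hm2
    simp only [hy₂_def]
    rw [if_neg (by omega), hJ, if_neg (by omega)]
  -- zipWord pointwise facts for the six convolutions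
  have zy₁z_e : ∀ j, 2 ≤ j → j % 2 = 0 → ∀ m, h j ≤ m → m < h (j+1) →
      zipWord y₁ z m = zipWord x₁ z m := by
    intro j hj _ m hm1 hm2
    have : h 2 ≤ m := le_trans (hmono.le_iff_le.2 hj) hm1
    simp [zipWord, hy1ge m this]
  have zy₁z_o : ∀ j, 2 ≤ j → j % 2 = 1 → ∀ m, h j ≤ m → m < h (j+1) →
      zipWord y₁ z m = zipWord x₁ z m := by
    intro j hj _ m hm1 hm2
    have : h 2 ≤ m := le_trans (hmono.le_iff_le.2 hj) hm1
    simp [zipWord, hy1ge m this]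
  have zy₂z_e : ∀ j, 2 ≤ j → j % 2 = 0 → ∀ m, h j ≤ m → m < h (j+1) →
      zipWord y₂ z m = zipWord x₂ z m := by
    intro j hj hpar m hm1 hm2
    simp [zipWord, hy2e j hj hpar m hm1 hm2]
  have zy₂z_o : ∀ j, 2 ≤ j → j % 2 = 1 → ∀ m, h j ≤ m → m < h (j+1) →
      zipWord y₂ z m = zipWord x₁ z m := by
    intro j hj hpar m hm1 hm2
    simp [zipWord, hy2o j hj hpar m hm1 hm2]
  have hy1ge' : ∀ j, 2 ≤ j → ∀ m, h j ≤ m → m < h (j+1) → y₁ m = x₁ m := by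
    intro j hj m hm1 _
    exact hy1ge m (le_trans (hmono.le_iff_le.2 hj) hm1)
  have z11_e : ∀ j, 2 ≤ j → j % 2 = 0 → ∀ m, h j ≤ m → m < h (j+1) →
      zipWord y₁ y₁ m = zipWord x₁ x₁ m := by
    intro j hj _ m hm1 hm2; simp [zipWord, hy1ge' j hj m hm1 hm2]
  have z11_o : ∀ j, 2 ≤ j → j % 2 = 1 → ∀ m, h j ≤ m → m < h (j+1) →
      zipWord y₁ y₁ m = zipWord x₁ x₁ m := by
    intro j hj _ m hm1 hm2; simp [zipWord, hy1ge' j hj m hm1 hm2]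
  have z22_e : ∀ j, 2 ≤ j → j % 2 = 0 → ∀ m, h j ≤ m → m < h (j+1) →
      zipWord y₂ y₂ m = zipWord x₂ x₂ m := by
    intro j hj hpar m hm1 hm2; simp [zipWord, hy2e j hj hpar m hm1 hm2]
  have z22_o : ∀ j, 2 ≤ j → j % 2 = 1 → ∀ m, h j ≤ m → m < h (j+1) →
      zipWord y₂ y₂ m = zipWord x₁ x₁ m := by
    intro j hj hpar m hm1 hm2; simp [zipWord, hy2o j hj hpar m hm1 hm2]
  have z12_e : ∀ j, 2 ≤ j → j % 2 = 0 → ∀ m, h j ≤ m → m < h (j+1) →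
      zipWord y₁ y₂ m = zipWord x₁ x₂ m := by
    intro j hj hpar m hm1 hm2
    simp [zipWord, hy1ge' j hj m hm1 hm2, hy2e j hj hpar m hm1 hm2]
  have z12_o : ∀ j, 2 ≤ j → j % 2 = 1 → ∀ m, h j ≤ m → m < h (j+1) →
      zipWord y₁ y₂ m = zipWord x₁ x₁ m := by
    intro j hj hpar m hm1 hm2
    simp [zipWord, hy1ge' j hj m hm1 hm2, hy2o j hj hpar m hm1 hm2]
  have z21_e : ∀ j, 2 ≤ j → j % 2 = 0 → ∀ m, h j ≤ m → m < h (j+1) →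
      zipWord y₂ y₁ m = zipWord x₂ x₁ m := by
    intro j hj hpar m hm1 hm2
    simp [zipWord, hy1ge' j hj m hm1 hm2, hy2e j hj hpar m hm1 hm2]
  have z21_o : ∀ j, 2 ≤ j → j % 2 = 1 → ∀ m, h j ≤ m → m < h (j+1) →
      zipWord y₂ y₁ m = zipWord x₁ x₁ m := by
    intro j hj hpar m hm1 hm2
    simp [zipWord, hy1ge' j hj m hm1 hm2, hy2o j hj hpar m hm1 hm2]
  -- reindexing of G blocks
  have hGn : ∀ n, G n = h (2 * (k * n) + 2) := fun n => congrArg h (by ring)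
  have hGn' : ∀ n, G (n + 1) = h (2 * (k * n) + 2 + 2 * k) := fun n => congrArg h (by ring)
  -- idempotency of tu, td
  have htuid : tu * tu = tu := by
    have e1 : tu = (t₁₂ * t₁₁) ^ k₁ := by
      rw [htu_def, hk_def, pow_mul, idem_pow hk₁ k₂ hk₂pos]
    rw [e1, hk₁]
  have htdid : td * td = td := by
    have e1 : td = (t₂₁ * t₁₁) ^ k₂ := by
      rw [htd_def, hk_def, Nat.mul_comm, pow_mul, idem_pow hk₂ k₁ hk₁pos]
    rw [e1, hk₂]
  refine ⟨G, y₁, y₂, q, t₁₁, tu, td, ?_, ?_, hq, ht₁₁, htuid, htdid, hy1lt, hy1ge, hy2lt,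
    ?_, ?_, ?_, ?_, ?_, ?_, ?_, ?_, ?_, ?_, ?_⟩
  · -- StrictMono G
    intro a b hab
    exact hmono (Nat.add_lt_add_right (Nat.mul_lt_mul_of_pos_left hab (by positivity)) 2)
  · exact fun n => ⟨2 * k * n + 2, rfl⟩
  · -- (2)
    intro n
    obtain ⟨m, hm1, hm2, hm3⟩ := ha (2 * k * n + 2)
    refine ⟨m, hm1, ?_, ?_⟩
    · calc m < h (2 * k * n + 2 + 1) := hm2
        _ ≤ G (n + 1) := by
            rw [hGn' n]
            exact hmono.le_iff_le.2 (by
              have e : 2*k*n = 2*(k*n) := by ring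
              omega)
    · have e1 : y₁ m = x₁ m := hy1ge m (le_trans (hmono.le_iff_le.2 (by omega)) hm1)
      have e2 : y₂ m = x₂ m := by
        obtain ⟨c, hc⟩ : ∃ c, 2 * k * n + 2 = 2 * c + 2 := ⟨k * n, by ring⟩
        rw [hc] at hm1 hm2
        exact hy2e (2 * c + 2) (by omega) (by omega) m hm1 hm2
      rw [e1, e2]; exact hm3
  · -- Homog f q G (zipWord y₁ z)
    intro n
    rw [hGn n, hGn' n, Gblock f _ _ _ hmono q q (zy₁z_e) (zy₁z_o) hb₁ hb₁ k (k*n),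
      hq, idem_pow hq k hkpos]
  · -- Homog f q G (zipWord y₂ z)
    intro n
    rw [hGn n, hGn' n, Gblock f _ _ _ hmono q q (zy₂z_e) (zy₂z_o) hb₂ hb₁ k (k*n),
      hq, idem_pow hq k hkpos]
  · -- tu * t₁₁ = tu
    exact pow_mul_idem ht₁₁ hkpos
  · -- td * t₁₁ = td
    exact pow_mul_idem ht₁₁ hkpos
  · -- prefix for y₁
    have hG0 : G 0 = h 2 := congrArg h (by ring)
    have hsplit := blockProd_split g (zipWord y₁ y₁) (Nat.zero_le (h 1))
      (le_of_lt (hmono (by omega : (1:ℕ) < 2)))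
    have hblk : blockProd g (zipWord y₁ y₁) (h 1) (h 2) = t₂₂ := by
      rw [blockProd_congr g (β := zipWord x₂ x₂)
        (fun i hi1 hi2 => by simp [zipWord, hy1lt i hi2])]
      exact hc₂₂ 1
    rw [hG0, hsplit, hblk, mul_assoc, ← hteq, ht₁₁]
  · -- prefix for y₂
    have hG0 : G 0 = h 2 := congrArg h (by ring)
    have hsplit := blockProd_split g (zipWord y₂ y₂) (Nat.zero_le (h 1))
      (le_of_lt (hmono (by omega : (1:ℕ) < 2)))
    have hblk : blockProd g (zipWord y₂ y₂) (h 1) (h 2) = t₂₂ := by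
      rw [blockProd_congr g (β := zipWord x₂ x₂)
        (fun i hi1 hi2 => by simp [zipWord, hy2lt i hi2])]
      exact hc₂₂ 1
    rw [hG0, hsplit, hblk, mul_assoc, ← hteq, ht₁₁]
  · -- Homog g t₁₁ G (zipWord y₁ y₁)
    intro n
    rw [hGn n, hGn' n, Gblock g _ _ _ hmono t₁₁ t₁₁ z11_e z11_o hc₁₁ hc₁₁ k (k*n),
      ht₁₁, idem_pow ht₁₁ k hkpos]
  · -- Homog g t₁₁ G (zipWord y₂ y₂)
    intro n
    have hc₂₂' : ∀ j, blockProd g (zipWord x₂ x₂) (h j) (h (j+1)) = t₁₁ := by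
      intro j; rw [hc₂₂ j, hteq]
    rw [hGn n, hGn' n, Gblock g _ _ _ hmono t₁₁ t₁₁ z22_e z22_o hc₂₂' hc₁₁ k (k*n),
      ht₁₁, idem_pow ht₁₁ k hkpos]
  · -- Homog g tu G (zipWord y₁ y₂)
    intro n
    rw [hGn n, hGn' n, Gblock g _ _ _ hmono t₁₂ t₁₁ z12_e z12_o hc₁₂ hc₁₁ k (k*n)]
  · -- Homog g td G (zipWord y₂ y₁)
    intro n
    rw [hGn n, hGn' n, Gblock g _ _ _ hmono t₂₁ t₁₁ z21_e z21_o hc₂₁ hc₁₁ k (k*n)]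
end

section
/- Let Σ be an alphabet, g : ℕ → ℕ strictly increasing, and y₁, y₂ : ℕ → Σ ω-words such that for every n ∈ ℕ there is a position m with g(n) ≤ m < g(n+1) and y₁ m ≠ y₂ m. Then for all S, T ⊆ ℕ, the shuffles satisfy: χ_S =_e χ_T if and only if S =_e T (i.e. the symmetric difference S △ T is finite). In particular, the map S ↦ χ_S induces an injection from equal-ends classes of subsets of ℕ into equal-ends classes of ω-words. -/
open Classical in
/-- The shuffle `χ_S` of `y₁` and `y₂` along `g` and `S`: it equals `y₂` below `g 0`,
and on the block `[g n, g (n+1))` it equals `y₂` if `n ∈ S` and `y₁` otherwise. -/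
noncomputable def shuffle {A : Type*} (y₁ y₂ : ℕ → A) (g : ℕ → ℕ) (S : Set ℕ) : ℕ → A :=
  fun i =>
    if i < g 0 then y₂ i
    else if Nat.findGreatest (fun n => g n ≤ i) i ∈ S then y₂ i else y₁ i

open Classical in
lemma shuffle_block {A : Type*} {g : ℕ → ℕ} (hg : StrictMono g) (y₁ y₂ : ℕ → A)
    (S : Set ℕ) {n i : ℕ} (h1 : g n ≤ i) (h2 : i < g (n + 1)) :
    shuffle y₁ y₂ g S i = if n ∈ S then y₂ i else y₁ i := by
  have hge : ¬ i < g 0 := not_lt.2 ((hg.monotone (Nat.zero_le n)).trans h1)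
  have hfg : Nat.findGreatest (fun n => g n ≤ i) i = n := by
    rw [Nat.findGreatest_eq_iff]
    refine ⟨hg.le_apply.trans h1, fun _ => h1, fun k hk _ hgk => ?_⟩
    exact absurd hgk (not_le.2 (lt_of_lt_of_le h2 (hg.monotone hk)))
  simp only [shuffle, hge, if_false, hfg]


/-- if every `g`-block contains a position where `y₁` and `y₂` differ,
then `χ_S =_e χ_T` iff `S` and `T` have finite symmetric difference; in particular
`S ↦ χ_S` induces an injection of equal-ends classes of subsets of ℕ into equal-ends
classes of ω-words. -/
theorem stmt11 {A : Type*} (g : ℕ → ℕ) (hg : StrictMono g) (y₁ y₂ : ℕ → A)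
    (hd : ∀ n : ℕ, ∃ m : ℕ, g n ≤ m ∧ m < g (n + 1) ∧ y₁ m ≠ y₂ m) :
    (∀ S T : Set ℕ,
      ((∀ᶠ i in Filter.atTop, shuffle y₁ y₂ g S i = shuffle y₁ y₂ g T i) ↔
        (symmDiff S T).Finite)) ∧
    ∃ F : Quot (fun S T : Set ℕ => (symmDiff S T).Finite) →
          Quot (fun x y : ℕ → A => ∀ᶠ n in Filter.atTop, x n = y n),
      Function.Injective F ∧
      ∀ S : Set ℕ, F (Quot.mk _ S) = Quot.mk _ (shuffle y₁ y₂ g S) := by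
  have main : ∀ S T : Set ℕ,
      ((∀ᶠ i in Filter.atTop, shuffle y₁ y₂ g S i = shuffle y₁ y₂ g T i) ↔
        (symmDiff S T).Finite) := by
    intro S T
    constructor
    · intro h
      obtain ⟨N, hN⟩ := Filter.eventually_atTop.1 h
      apply Set.Finite.subset (Set.finite_Iio N)
      intro n hn
      by_contra hn'
      have hnN : N ≤ n := not_lt.1 hn'
      obtain ⟨m, hm1, hm2, hm3⟩ := hd n
      have hmN : N ≤ m := hnN.trans (hg.le_apply.trans hm1)
      have := hN m hmN
      rw [shuffle_block hg y₁ y₂ S hm1 hm2, shuffle_block hg y₁ y₂ T hm1 hm2] at this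
      rw [Set.mem_symmDiff] at hn
      rcases hn with ⟨hS, hT⟩ | ⟨hT, hS⟩ <;> simp [hS, hT] at this <;>
        first | exact hm3 this | exact hm3 this.symm
    · intro h
      obtain ⟨N, hN⟩ := h.bddAbove
      rw [Filter.eventually_atTop]
      refine ⟨g (N + 1), fun i hi => ?_⟩
      have hge : ¬ i < g 0 := not_lt.2 ((hg.monotone (Nat.zero_le (N + 1))).trans hi)
      have hN1 : N + 1 ≤ Nat.findGreatest (fun n => g n ≤ i) i :=
        Nat.le_findGreatest (hg.le_apply.trans hi) hi
      have hnot : Nat.findGreatest (fun n => g n ≤ i) i ∉ symmDiff S T := fun hmem =>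
        absurd (hN hmem) (not_le.2 (Nat.lt_of_succ_le hN1))
      rw [Set.mem_symmDiff] at hnot
      push_neg at hnot
      have hiff : Nat.findGreatest (fun n => g n ≤ i) i ∈ S ↔
          Nat.findGreatest (fun n => g n ≤ i) i ∈ T := by tauto
      simp only [shuffle, hge, if_false]
      by_cases hS : Nat.findGreatest (fun n => g n ≤ i) i ∈ S
      · simp [hS, hiff.1 hS]
      · have hT : Nat.findGreatest (fun n => g n ≤ i) i ∉ T := fun h => hS (hiff.2 h)
        simp [hS, hT]
  refine ⟨main, Quot.lift (fun S => Quot.mk _ (shuffle y₁ y₂ g S))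
      (fun S T h => Quot.sound ((main S T).2 h)), ?_, fun S => rfl⟩
  intro q1 q2
  induction q1 using Quot.ind with | _ S =>
  induction q2 using Quot.ind with | _ T =>
  intro h
  have hequiv : Equivalence (fun x y : ℕ → A => ∀ᶠ n in Filter.atTop, x n = y n) :=
    ⟨fun x => Filter.Eventually.of_forall fun _ => rfl,
     fun h => h.mono fun _ e => e.symm,
     fun h1 h2 => (h1.and h2).mono fun _ ⟨a, b⟩ => a.trans b⟩
  have hev := hequiv.eqvGen_iff.1 (Quot.eq.1 h)
  exact Quot.sound ((main S T).1 hev)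
end
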